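/- Let R be a unital ring, A a 3×3 matrix over R with diagonal (a, b, c), and for k = 1, 2, 3 let s_k, t_k, u_k ∈ R. If a + b + c - Σ_{k=1}^{3}(s_k + t_k + u_k) is a commutator, then A = U T₁ U⁻¹ + T₂ + T₃, where U is invertible, T₁ and T₂ are upper triangular with diagonals (s₁, t₁, u₁) and (s₂, t₂, u₂) respectively, and T₃ is lower triangular with diagonal (u₃, t₃, s₃). -/
import Mathlib


theorem stmt_6 (R : Type*) [Ring R] (A : Matrix (Fin 3) (Fin 3) R)
    (s t u : Fin 3 → R)
    (h : ∃ x y : R, A 0 0 + A 1 1 + A 2 2 - (∑ k : Fin 3, (s k + t k + u k))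
      = x * y - y * x) :
    ∃ U V T₁ T₂ T₃ : Matrix (Fin 3) (Fin 3) R,
      U * V = 1 ∧ V * U = 1 ∧
      A = U * T₁ * V + T₂ + T₃ ∧
      (∀ i j : Fin 3, j < i → T₁ i j = 0) ∧
      (∀ i j : Fin 3, j < i → T₂ i j = 0) ∧
      (∀ i j : Fin 3, i < j → T₃ i j = 0) ∧
      T₁ 0 0 = s 0 ∧ T₁ 1 1 = t 0 ∧ T₁ 2 2 = u 0 ∧
      T₂ 0 0 = s 1 ∧ T₂ 1 1 = t 1 ∧ T₂ 2 2 = u 1 ∧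
      T₃ 0 0 = u 2 ∧ T₃ 1 1 = t 2 ∧ T₃ 2 2 = s 2 := by
  obtain ⟨x, y, hxy⟩ := h
  rw [Fin.sum_univ_three] at hxy
  set e0 : R := A 0 0 - s 0 - s 1 - u 2 with he0
  set e1 : R := A 1 1 - t 0 - t 1 - t 2 with he1
  set q : R := -(y * x) - e0 with hq
  set f : R := x * y - e1 with hf
  set r : R := f - x * q with hr
  set T₁ : Matrix (Fin 3) (Fin 3) R := !![s 0, y, q; 0, t 0, r; 0, 0, u 0] with hT1
  set U : Matrix (Fin 3) (Fin 3) R := !![1, 0, 0; x, 1, 0; x + 1, 1, 1] with hU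
  set V : Matrix (Fin 3) (Fin 3) R := !![1, 0, 0; -x, 1, 0; -1, -1, 1] with hV
  set M : Matrix (Fin 3) (Fin 3) R := U * T₁ * V with hM
  set T₂ : Matrix (Fin 3) (Fin 3) R :=
    !![s 1, A 0 1 - M 0 1, A 0 2 - M 0 2; 0, t 1, A 1 2 - M 1 2; 0, 0, u 1] with hT2
  refine ⟨U, V, T₁, T₂, A - M - T₂, ?_, ?_, ?_, ?_, ?_, ?_, ?_, ?_, ?_, ?_, ?_, ?_, ?_, ?_, ?_⟩
  · ext i j
    rw [hU, hV, Matrix.one_fin_three]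
    fin_cases i <;> fin_cases j <;>
      simp [Matrix.mul_apply, Fin.sum_univ_three, Matrix.vecHead, Matrix.vecTail] <;>
      first | noncomm_ring | abel
  · ext i j
    rw [hU, hV, Matrix.one_fin_three]
    fin_cases i <;> fin_cases j <;>
      simp [Matrix.mul_apply, Fin.sum_univ_three, Matrix.vecHead, Matrix.vecTail] <;>
      first | noncomm_ring | abel
  · rw [← hM]; abel
  · intro i j hij
    fin_cases i <;> fin_cases j <;> first | exact absurd hij (by decide) | simp [hT1, Matrix.vecHead, Matrix.vecTail]
  · intro i j hij
    fin_cases i <;> fin_cases j <;> first | exact absurd hij (by decide) | simp [hT2, Matrix.vecHead, Matrix.vecTail]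
  · intro i j hij
    fin_cases i <;> fin_cases j <;>
      first
        | exact absurd hij (by decide)
        | (show A _ _ - M _ _ - T₂ _ _ = 0
           rw [hT2]
           simp)
  · simp [hT1]
  · simp [hT1]
  · simp [hT1]
  · simp [hT2]
  · simp [hT2]
  · simp [hT2]
  · show A 0 0 - M 0 0 - T₂ 0 0 = u 2
    rw [hT2, hM, hU, hV, hT1]
    simp [Matrix.mul_apply, Fin.sum_univ_three, hq, hr, hf, he0, he1]
    noncomm_ring
  · show A 1 1 - M 1 1 - T₂ 1 1 = t 2
    rw [hT2, hM, hU, hV, hT1]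
    simp [Matrix.mul_apply, Fin.sum_univ_three, hq, hr, hf, he0, he1]
    noncomm_ring
  · show A 2 2 - M 2 2 - T₂ 2 2 = s 2
    rw [← sub_eq_zero]
    have key : A 0 0 + A 1 1 + A 2 2 -
        (s 0 + t 0 + u 0 + (s 1 + t 1 + u 1) + (s 2 + t 2 + u 2)) - (x * y - y * x) = 0 := by
      rw [hxy]; abel
    rw [← key]
    rw [hT2, hM, hU, hV, hT1]
    simp [Matrix.mul_apply, Fin.sum_univ_three, hq, hr, hf, he0, he1]
    noncomm_ring
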